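/- If G is a conservative field for f : ℝⁿ → ℝ (locally Lipschitz) and also a conservative field for g : ℝⁿ → ℝ (locally Lipschitz), then f - g is constant on ℝⁿ. -/

import Mathlib

open Set MeasureTheory
open scoped RealInnerProductSpace

/-- A set-valued map is locally bounded if every point has a neighborhood with bounded image. -/
def LocBdd {n : ℕ} (G : EuclideanSpace ℝ (Fin n) → Set (EuclideanSpace ℝ (Fin n))) : Prop :=
  ∀ x, ∃ U ∈ nhds x, Bornology.IsBounded (⋃ y ∈ U, G y)

/-- `x'` is an integrable derivative representation of the absolutely continuous
curve `x : [0,1] → ℝⁿ`. -/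
def IsACCurve {n : ℕ} (x x' : ℝ → EuclideanSpace ℝ (Fin n)) : Prop :=
  IntervalIntegrable x' volume 0 1 ∧
    ∀ t ∈ Icc (0:ℝ) 1, x t = x 0 + ∫ s in (0:ℝ)..t, x' s

/-- Conservative field for a function `f` (Definition 1 of the paper). -/
def IsConservativeField {n : ℕ} (f : EuclideanSpace ℝ (Fin n) → ℝ)
    (G : EuclideanSpace ℝ (Fin n) → Set (EuclideanSpace ℝ (Fin n))) : Prop :=
  (∀ x, (G x).Nonempty) ∧
  IsClosed {p : EuclideanSpace ℝ (Fin n) × EuclideanSpace ℝ (Fin n) | p.2 ∈ G p.1} ∧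
  LocBdd G ∧
  ∀ (x x' : ℝ → EuclideanSpace ℝ (Fin n)), IsACCurve x x' →
    ∀ᵐ t ∂ (volume.restrict (Icc (0:ℝ) 1)),
      ∀ v ∈ G (x t), HasDerivAt (fun s => f (x s)) ⟪x' t, v⟫ t

lemma image_null_of_locallyLipschitz {h : ℝ → ℝ} (hl : LocallyLipschitz h) {s : Set ℝ}
    (hs : volume s = 0) : volume (h '' s) = 0 := by
  choose K U hU hlip using hl
  obtain ⟨T, hTc, hTu⟩ := TopologicalSpace.countable_cover_nhds hU
  have hsub : h '' s ⊆ ⋃ x ∈ T, h '' (s ∩ U x) := by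
    rintro z ⟨w, hw, rfl⟩
    have hw' : w ∈ ⋃ x ∈ T, U x := hTu ▸ mem_univ w
    obtain ⟨x, hx, hwx⟩ := mem_iUnion₂.1 hw'
    exact mem_iUnion₂.2 ⟨x, hx, mem_image_of_mem _ ⟨hw, hwx⟩⟩
  refine measure_mono_null hsub ((measure_biUnion_null_iff hTc).2 fun x _ => ?_)
  have h1 := ((hlip x).mono (inter_subset_right : s ∩ U x ⊆ U x)).hausdorffMeasure_image_le (zero_le_one (α := ℝ))
  rw [hausdorffMeasure_real] at h1
  refine le_antisymm (h1.trans ?_) zero_le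
  rw [measure_mono_null inter_subset_left hs, mul_zero]

lemma det_zero_clm : (0 : ℝ →L[ℝ] ℝ).det = 0 := by
  simp [ContinuousLinearMap.det]

lemma key_const {h : ℝ → ℝ} (hl : LocallyLipschitz h)
    (hd : ∀ᵐ t ∂(volume.restrict (Icc (0:ℝ) 1)), HasDerivAt h 0 t) : h 1 = h 0 := by
  set D : Set ℝ := {t | HasDerivAt h 0 t}
  have hN : volume (Dᶜ ∩ Icc (0:ℝ) 1) = 0 := by
    have := ae_iff.1 hd
    rwa [Measure.restrict_apply' measurableSet_Icc] at this
  have himg : volume (h '' Icc (0:ℝ) 1) = 0 := by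
    have hsplit : h '' Icc (0:ℝ) 1 ⊆ h '' (D ∩ Icc 0 1) ∪ h '' (Dᶜ ∩ Icc 0 1) := by
      rintro z ⟨w, hw, rfl⟩
      by_cases hwD : w ∈ D
      · exact Or.inl (mem_image_of_mem _ ⟨hwD, hw⟩)
      · exact Or.inr (mem_image_of_mem _ ⟨hwD, hw⟩)
    refine measure_mono_null hsplit (measure_union_null ?_ ?_)
    · refine addHaar_image_eq_zero_of_det_fderivWithin_eq_zero volume
        (f' := fun _ => (0 : ℝ →L[ℝ] ℝ)) (fun x hx => ?_) (fun x _ => det_zero_clm)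
      have : HasFDerivAt h (0 : ℝ →L[ℝ] ℝ) x := by
        exact (hx.1 : HasDerivAt h 0 x).hasFDerivAt.congr_fderiv (by ext v; simp)
      exact this.hasFDerivWithinAt
    · exact image_null_of_locallyLipschitz hl hN
  have hcont : ContinuousOn h (Icc (0:ℝ) 1) := hl.continuous.continuousOn
  rcases le_total (h 0) (h 1) with hle | hle
  · have hIVT := intermediate_value_Icc (zero_le_one (α := ℝ)) hcont
    have := measure_mono_null hIVT himg
    rw [Real.volume_Icc] at this
    have := ENNReal.ofReal_eq_zero.1 this
    linarith
  · have hIVT := intermediate_value_Icc' (zero_le_one (α := ℝ)) hcont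
    have := measure_mono_null hIVT himg
    rw [Real.volume_Icc] at this
    have := ENNReal.ofReal_eq_zero.1 this
    linarith

/-- If `G` is a conservative field for both `f` and `g`, then `f - g` is constant. -/
theorem stmt7 {n : ℕ} (f g : EuclideanSpace ℝ (Fin n) → ℝ)
    (hf : LocallyLipschitz f) (hg : LocallyLipschitz g)
    (G : EuclideanSpace ℝ (Fin n) → Set (EuclideanSpace ℝ (Fin n)))
    (hGf : IsConservativeField f G) (hGg : IsConservativeField g G) :
    ∀ x y : EuclideanSpace ℝ (Fin n), f x - g x = f y - g y := by
  intro x y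
  set c : ℝ → EuclideanSpace ℝ (Fin n) := fun t => y + t • (x - y) with hc_def
  have hcurve : IsACCurve c (fun _ => x - y) := by
    refine ⟨intervalIntegrable_const, fun t _ => ?_⟩
    simp [hc_def, intervalIntegral.integral_const, smul_sub]
  have hp := hGf.2.2.2 c (fun _ => x - y) hcurve
  have hq := hGg.2.2.2 c (fun _ => x - y) hcurve
  have hae : ∀ᵐ t ∂(volume.restrict (Icc (0:ℝ) 1)),
      HasDerivAt (fun s => f (c s) - g (c s)) 0 t := by
    filter_upwards [hp, hq] with t h1 h2
    obtain ⟨v, hv⟩ := hGf.1 (c t)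
    have h3 := (h1 v hv).sub (h2 v hv)
    rw [sub_self] at h3
    exact h3
  have hclip : LocallyLipschitz c := by
    have : LipschitzWith ‖x - y‖₊ c := by
      apply LipschitzWith.of_dist_le_mul
      intro s t
      simp only [hc_def, dist_eq_norm]
      rw [show y + s • (x - y) - (y + t • (x - y)) = (s - t) • (x - y) by module]
      rw [norm_smul, Real.norm_eq_abs, coe_nnnorm, mul_comm]
    exact this.locallyLipschitz
  have hkey := key_const ((hf.comp hclip).sub (hg.comp hclip)) hae
  have h1 : c 1 = x := by simp [hc_def]
  have h0 : c 0 = y := by simp [hc_def]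
  simpa [h1, h0] using hkey
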